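/- Let 0 < α₀ < 1 and let u : (0,α₀] × (0,∞) → ℝ be measurable. Assume: (a) u(α,t) → u₀ as (α,t) → (0,0) with α ∈ (0,α₀], t > 0; (b) there exists c > 0 such that ∫₀^∞ |u(α,t)| dt ≤ c for all α ∈ (0,α₀]. Then lim_{α→0⁺} (1/Γ(α)) ∫₀^∞ t^{α−1} u(α,t) dt = u₀. -/

import Mathlib

open MeasureTheory Filter Real

lemma riesz_aux_ind_meas {β : Type*} [MeasurableSpace β] [Zero β] {f : ℝ × ℝ → β}
    {s : Set (ℝ × ℝ)} (hs : MeasurableSet s) (h : Measurable (s.restrict f)) :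
    Measurable (s.indicator f) := by
  have he : MeasurableEmbedding ((↑) : s → ℝ × ℝ) := MeasurableEmbedding.subtype_coe hs
  have hext : s.indicator f = Function.extend Subtype.val (s.restrict f) 0 := by
    funext x
    by_cases hx : x ∈ s
    · rw [Set.indicator_of_mem hx]
      have := Subtype.val_injective.extend_apply (s.restrict f) (0 : ℝ × ℝ → β) ⟨x, hx⟩
      exact this.symm
    · rw [Set.indicator_of_notMem hx, Function.extend_apply']
      · rfl
      · rintro ⟨a, rfl⟩; exact hx a.2
  rw [hext]
  exact he.measurable_extend h measurable_const

/-- Limiting property of one-dimensional Riesz-type integrals with a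
parameter-dependent density: if `u(α,t) → u₀` as `(α,t) → (0,0)` and the integrals
`∫₀^∞ |u(α,t)| dt` are uniformly bounded, then
`(1/Γ(α)) ∫₀^∞ t^{α-1} u(α,t) dt → u₀` as `α → 0⁺`. -/
theorem riesz_limit_parametric (α₀ : ℝ) (hα₀ : 0 < α₀) (hα₀' : α₀ < 1)
    (u : ℝ → ℝ → ℝ) (u₀ : ℝ)
    (hmeas : Measurable ((Set.Ioc (0 : ℝ) α₀ ×ˢ Set.Ioi (0 : ℝ)).restrict
      (Function.uncurry u)))
    (hlim : ∀ ε > (0 : ℝ), ∃ δ > (0 : ℝ), ∀ α ∈ Set.Ioc (0 : ℝ) α₀, ∀ t > (0 : ℝ),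
      α + t < δ → |u α t - u₀| < ε)
    (c : ℝ) (hc : 0 < c)
    (hbound : ∀ α ∈ Set.Ioc (0 : ℝ) α₀,
      ∫⁻ t in Set.Ioi (0 : ℝ), ENNReal.ofReal |u α t| ≤ ENNReal.ofReal c) :
    Tendsto (fun α : ℝ => (1 / Real.Gamma α) * ∫ t in Set.Ioi (0 : ℝ), t ^ (α - 1) * u α t)
      (nhdsWithin 0 (Set.Ioi (0 : ℝ))) (nhds u₀) := by
  have hsmeas : MeasurableSet (Set.Ioc (0 : ℝ) α₀ ×ˢ Set.Ioi (0 : ℝ)) :=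
    measurableSet_Ioc.prod measurableSet_Ioi
  have hw : Measurable ((Set.Ioc (0 : ℝ) α₀ ×ˢ Set.Ioi (0 : ℝ)).indicator (Function.uncurry u)) :=
    riesz_aux_ind_meas hsmeas hmeas
  -- measurability of the sections
  have huα : ∀ α ∈ Set.Ioc (0 : ℝ) α₀, AEMeasurable (u α) (volume.restrict (Set.Ioi (0:ℝ))) := by
    intro α hα
    have h1 : Measurable (fun t =>
        (Set.Ioc (0 : ℝ) α₀ ×ˢ Set.Ioi (0 : ℝ)).indicator (Function.uncurry u) (α, t)) :=
      hw.comp measurable_prodMk_left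
    refine h1.aemeasurable.congr ?_
    filter_upwards [ae_restrict_mem measurableSet_Ioi] with t ht
    rw [Set.indicator_of_mem (Set.mk_mem_prod hα ht)]
    rfl
  -- integrability of `u α` and the real bound
  have hint_u : ∀ α ∈ Set.Ioc (0:ℝ) α₀, IntegrableOn (u α) (Set.Ioi (0:ℝ)) := by
    intro α hα
    refine ⟨(huα α hα).aestronglyMeasurable, ?_⟩
    rw [hasFiniteIntegral_iff_norm]
    calc ∫⁻ t in Set.Ioi (0:ℝ), ENNReal.ofReal ‖u α t‖
        = ∫⁻ t in Set.Ioi (0:ℝ), ENNReal.ofReal |u α t| := by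
          simp [Real.norm_eq_abs]
      _ ≤ ENNReal.ofReal c := hbound α hα
      _ < ⊤ := ENNReal.ofReal_lt_top
  have habs : ∀ α ∈ Set.Ioc (0:ℝ) α₀, ∫ t in Set.Ioi (0:ℝ), |u α t| ≤ c := by
    intro α hα
    rw [integral_eq_lintegral_of_nonneg_ae (Filter.Eventually.of_forall fun t => abs_nonneg _)
      (by simpa [Real.norm_eq_abs] using (huα α hα).aestronglyMeasurable.norm)]
    exact ENNReal.toReal_le_of_le_ofReal hc.le (hbound α hα)
  rw [Metric.tendsto_nhds]
  intro ε hε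
  set ε' : ℝ := ε / 2 with hε'def
  have hε' : 0 < ε' := by positivity
  obtain ⟨δ', hδ'pos, hδ'⟩ := hlim ε' hε'
  set δ : ℝ := δ' / 2 with hδdef
  have hδpos : 0 < δ := by positivity
  -- limit of the bounding function
  have hG1 : ContinuousAt Real.Gamma 1 := by
    refine (Real.differentiableAt_Gamma fun m => ?_).continuousAt
    have h0 : (0:ℝ) ≤ (m:ℝ) := Nat.cast_nonneg m
    intro h; linarith
  have hGcont : Tendsto (fun α : ℝ => Real.Gamma (α + 1)) (nhds 0) (nhds 1) := by
    have h2 : Tendsto (fun α : ℝ => α + 1) (nhds 0) (nhds 1) := by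
      simpa [Pi.add_def] using (continuous_id.add continuous_const).tendsto (0:ℝ)
    simpa [Real.Gamma_one, Function.comp_def] using (hG1.tendsto.comp h2)
  have hδrpow : Tendsto (fun α : ℝ => δ ^ α) (nhds 0) (nhds 1) := by
    have := (Real.continuousAt_const_rpow (a := δ) (b := 0) hδpos.ne').tendsto
    simpa [Real.rpow_zero] using this
  have hδrpow' : Tendsto (fun α : ℝ => δ ^ (α - 1)) (nhds 0) (nhds (δ ^ ((0:ℝ) - 1))) := by
    have h2 : Tendsto (fun α : ℝ => α - 1) (nhds (0:ℝ)) (nhds ((0:ℝ) - 1)) :=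
      (continuous_id.sub continuous_const).tendsto (0:ℝ)
    exact (Real.continuousAt_const_rpow (a := δ) hδpos.ne').tendsto.comp h2
  have h_ratio : Tendsto (fun α : ℝ => δ ^ α / Real.Gamma (α + 1)) (nhds 0) (nhds 1) := by
    simpa [Pi.div_def] using hδrpow.div hGcont one_ne_zero
  have h_quot : Tendsto (fun α : ℝ => α / Real.Gamma (α + 1)) (nhds 0) (nhds 0) := by
    simpa [Pi.div_def] using (tendsto_id.div hGcont one_ne_zero)
  set g : ℝ → ℝ := fun α => ε' * (δ ^ α / Real.Gamma (α + 1)) +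
      |u₀| * |δ ^ α / Real.Gamma (α + 1) - 1| +
      c * δ ^ (α - 1) * (α / Real.Gamma (α + 1)) with hgdef
  have hg0 : Tendsto g (nhds 0)
      (nhds (ε' * 1 + |u₀| * |1 - 1| + c * δ ^ ((0:ℝ) - 1) * 0)) := by
    exact ((tendsto_const_nhds.mul h_ratio).add
      (tendsto_const_nhds.mul ((h_ratio.sub tendsto_const_nhds).abs))).add
      ((tendsto_const_nhds.mul hδrpow').mul h_quot)
  have hval : ε' * 1 + |u₀| * |1 - 1| + c * δ ^ ((0:ℝ) - 1) * 0 = ε' := by norm_num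
  rw [hval] at hg0
  have hg_ev : ∀ᶠ α in nhdsWithin 0 (Set.Ioi (0:ℝ)), g α < ε :=
    (hg0.mono_left nhdsWithin_le_nhds).eventually_lt_const (by linarith)
  set m : ℝ := min α₀ (min 1 δ) with hmdef
  have hm : 0 < m := lt_min hα₀ (lt_min one_pos hδpos)
  have hmem_ev : Set.Ioo (0:ℝ) m ∈ nhdsWithin 0 (Set.Ioi (0:ℝ)) :=
    Ioo_mem_nhdsGT_of_mem ⟨le_refl 0, hm⟩
  filter_upwards [hmem_ev, hg_ev] with α hαIoo hgα
  have hα1 : 0 < α := hαIoo.1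
  have hαα₀ : α ≤ α₀ := le_of_lt (lt_of_lt_of_le hαIoo.2 (min_le_left _ _))
  have hαlt1 : α < 1 := lt_of_lt_of_le hαIoo.2 (le_trans (min_le_right _ _) (min_le_left _ _))
  have hαδ : α < δ := lt_of_lt_of_le hαIoo.2 (le_trans (min_le_right _ _) (min_le_right _ _))
  have hmem : α ∈ Set.Ioc (0:ℝ) α₀ := ⟨hα1, hαα₀⟩
  have hΓpos : 0 < Real.Gamma α := Real.Gamma_pos_of_pos hα1
  have hΓ1 : Real.Gamma (α + 1) = α * Real.Gamma α := Real.Gamma_add_one hα1.ne'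
  have hΓ1pos : 0 < Real.Gamma (α + 1) := Real.Gamma_pos_of_pos (by linarith)
  -- pointwise bound on (0, δ]
  have hnear : ∀ t ∈ Set.Ioc (0:ℝ) δ, |u α t - u₀| ≤ ε' := by
    intro t ht
    exact le_of_lt (hδ' α hmem t ht.1 (by have := ht.2; simp only [hδdef] at *; linarith))
  -- basic integrability pieces on (0, δ]
  have h_rpow_int : IntegrableOn (fun t : ℝ => t ^ (α - 1)) (Set.Ioc (0:ℝ) δ) := by
    have := (intervalIntegral.intervalIntegrable_rpow' (a := 0) (b := δ)
      (show (-1:ℝ) < α - 1 by linarith)).1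
    simpa using this
  have hrc : ContinuousOn (fun t : ℝ => t ^ (α - 1)) (Set.Ioi (0:ℝ)) := fun t ht =>
    (Real.continuousAt_rpow_const t (α - 1) (Or.inl (ne_of_gt ht))).continuousWithinAt
  have haesm : AEStronglyMeasurable (fun t : ℝ => t ^ (α - 1) * u α t)
      (volume.restrict (Set.Ioi (0:ℝ))) :=
    (hrc.aestronglyMeasurable measurableSet_Ioi).mul (huα α hmem).aestronglyMeasurable
  have h_ioc : IntegrableOn (fun t : ℝ => t ^ (α - 1) * u α t) (Set.Ioc (0:ℝ) δ) := by
    refine Integrable.mono' (h_rpow_int.mul_const (|u₀| + ε'))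
      (haesm.mono_measure (Measure.restrict_mono Set.Ioc_subset_Ioi_self le_rfl)) ?_
    filter_upwards [ae_restrict_mem measurableSet_Ioc] with t ht
    have htpos : 0 < t := ht.1
    have h1 : |u α t| ≤ |u₀| + ε' := by
      have h2 := hnear t ht
      have h3 := abs_sub_abs_le_abs_sub (u α t) u₀
      linarith
    have h4 : (0:ℝ) ≤ t ^ (α - 1) := Real.rpow_nonneg htpos.le _
    calc ‖t ^ (α - 1) * u α t‖ = t ^ (α - 1) * |u α t| := by
          rw [norm_mul, Real.norm_eq_abs, Real.norm_eq_abs, abs_of_nonneg h4]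
      _ ≤ t ^ (α - 1) * (|u₀| + ε') := mul_le_mul_of_nonneg_left h1 h4
  have h_ioi : IntegrableOn (fun t : ℝ => t ^ (α - 1) * u α t) (Set.Ioi δ) := by
    refine Integrable.mono'
      ((((hint_u α hmem).mono_set (Set.Ioi_subset_Ioi hδpos.le)).abs).const_mul (δ ^ (α - 1)))
      (haesm.mono_measure (Measure.restrict_mono (Set.Ioi_subset_Ioi hδpos.le) le_rfl)) ?_
    filter_upwards [ae_restrict_mem measurableSet_Ioi] with t ht
    have htδ : δ ≤ t := le_of_lt ht
    have h4 : t ^ (α - 1) ≤ δ ^ (α - 1) :=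
      Real.rpow_le_rpow_of_nonpos hδpos htδ (by linarith)
    have h5 : (0:ℝ) ≤ t ^ (α - 1) := Real.rpow_nonneg (le_trans hδpos.le htδ) _
    calc ‖t ^ (α - 1) * u α t‖ = t ^ (α - 1) * |u α t| := by
          rw [norm_mul, Real.norm_eq_abs, Real.norm_eq_abs, abs_of_nonneg h5]
      _ ≤ δ ^ (α - 1) * |u α t| := mul_le_mul_of_nonneg_right h4 (abs_nonneg _)
  -- split the integral
  set A : ℝ := ∫ t in Set.Ioc (0:ℝ) δ, t ^ (α - 1) * u α t with hAdef
  set B : ℝ := ∫ t in Set.Ioi δ, t ^ (α - 1) * u α t with hBdef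
  have hsplit : ∫ t in Set.Ioi (0:ℝ), t ^ (α - 1) * u α t = A + B := by
    rw [show Set.Ioi (0:ℝ) = Set.Ioc 0 δ ∪ Set.Ioi δ from (Set.Ioc_union_Ioi_eq_Ioi hδpos.le).symm,
      setIntegral_union (Set.Ioc_disjoint_Ioi le_rfl) measurableSet_Ioi h_ioc h_ioi]
  -- the model integral
  have hC : ∫ t in Set.Ioc (0:ℝ) δ, t ^ (α - 1) = δ ^ α / α := by
    rw [← intervalIntegral.integral_of_le hδpos.le,
      integral_rpow (Or.inl (show (-1:ℝ) < α - 1 by linarith))]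
    rw [sub_add_cancel, Real.zero_rpow hα1.ne']
    ring
  -- estimate on (0, δ]
  have hE1 : |A - u₀ * (δ ^ α / α)| ≤ ε' * (δ ^ α / α) := by
    have hconst : IntegrableOn (fun t : ℝ => t ^ (α - 1) * u₀) (Set.Ioc (0:ℝ) δ) :=
      h_rpow_int.mul_const u₀
    have hrepr : u₀ * (δ ^ α / α) = ∫ t in Set.Ioc (0:ℝ) δ, t ^ (α - 1) * u₀ := by
      rw [MeasureTheory.integral_mul_const, hC]; ring
    rw [hrepr, ← integral_sub h_ioc hconst]
    have h1 : |∫ t in Set.Ioc (0:ℝ) δ, (t ^ (α - 1) * u α t - t ^ (α - 1) * u₀)|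
        ≤ ∫ t in Set.Ioc (0:ℝ) δ, |t ^ (α - 1) * u α t - t ^ (α - 1) * u₀| := by
      have := norm_integral_le_integral_norm (μ := volume.restrict (Set.Ioc (0:ℝ) δ))
          (f := fun t : ℝ => t ^ (α - 1) * u α t - t ^ (α - 1) * u₀)
      simp only [Real.norm_eq_abs] at this
      exact this
    refine le_trans h1 ?_
    have h2 : ∫ t in Set.Ioc (0:ℝ) δ, |t ^ (α - 1) * u α t - t ^ (α - 1) * u₀|
        ≤ ∫ t in Set.Ioc (0:ℝ) δ, t ^ (α - 1) * ε' := by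
      refine setIntegral_mono_on ((h_ioc.sub hconst).abs) (h_rpow_int.mul_const ε')
        measurableSet_Ioc ?_
      intro t ht
      have h4 : (0:ℝ) ≤ t ^ (α - 1) := Real.rpow_nonneg ht.1.le _
      calc |t ^ (α - 1) * u α t - t ^ (α - 1) * u₀| = t ^ (α - 1) * |u α t - u₀| := by
            rw [← mul_sub, abs_mul, abs_of_nonneg h4]
        _ ≤ t ^ (α - 1) * ε' := mul_le_mul_of_nonneg_left (hnear t ht) h4
    refine le_trans h2 (le_of_eq ?_)
    rw [MeasureTheory.integral_mul_const, hC]; ring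
  -- estimate of the tail
  have hE2 : |B| ≤ δ ^ (α - 1) * c := by
    have h1 : |B| ≤ ∫ t in Set.Ioi δ, |t ^ (α - 1) * u α t| := by
      have := norm_integral_le_integral_norm (μ := volume.restrict (Set.Ioi δ))
          (f := fun t : ℝ => t ^ (α - 1) * u α t)
      simp only [Real.norm_eq_abs] at this
      exact this
    refine le_trans h1 ?_
    have habs_int : IntegrableOn (fun t : ℝ => |u α t|) (Set.Ioi (0:ℝ)) := (hint_u α hmem).abs
    have h2 : ∫ t in Set.Ioi δ, |t ^ (α - 1) * u α t|
        ≤ ∫ t in Set.Ioi δ, δ ^ (α - 1) * |u α t| := by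
      refine setIntegral_mono_on (h_ioi.abs)
        ((habs_int.mono_set (Set.Ioi_subset_Ioi hδpos.le)).const_mul _) measurableSet_Ioi ?_
      intro t ht
      have htδ : δ ≤ t := le_of_lt ht
      have h4 : t ^ (α - 1) ≤ δ ^ (α - 1) :=
        Real.rpow_le_rpow_of_nonpos hδpos htδ (by linarith)
      have h5 : (0:ℝ) ≤ t ^ (α - 1) := Real.rpow_nonneg (le_trans hδpos.le htδ) _
      calc |t ^ (α - 1) * u α t| = t ^ (α - 1) * |u α t| := by
            rw [abs_mul, abs_of_nonneg h5]
        _ ≤ δ ^ (α - 1) * |u α t| := mul_le_mul_of_nonneg_right h4 (abs_nonneg _)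
    refine le_trans h2 ?_
    rw [MeasureTheory.integral_const_mul]
    have h3 : ∫ t in Set.Ioi δ, |u α t| ≤ ∫ t in Set.Ioi (0:ℝ), |u α t| :=
      setIntegral_mono_set habs_int
        (Filter.Eventually.of_forall fun t => abs_nonneg _)
        (HasSubset.Subset.eventuallyLE (Set.Ioi_subset_Ioi hδpos.le))
    have h6 : (0:ℝ) ≤ δ ^ (α - 1) := Real.rpow_nonneg hδpos.le _
    exact mul_le_mul_of_nonneg_left (le_trans h3 (habs α hmem)) h6
  -- put it together
  rw [Real.dist_eq, hsplit]
  have hid : (1 / Real.Gamma α) * (A + B) - u₀ =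
      (1 / Real.Gamma α) * (A - u₀ * (δ ^ α / α)) +
      u₀ * (δ ^ α / Real.Gamma (α + 1) - 1) + (1 / Real.Gamma α) * B := by
    rw [hΓ1]
    field_simp
    ring
  rw [hid]
  have hΓinv : (0:ℝ) ≤ 1 / Real.Gamma α := by positivity
  have key : |(1 / Real.Gamma α) * (A - u₀ * (δ ^ α / α)) +
      u₀ * (δ ^ α / Real.Gamma (α + 1) - 1) + (1 / Real.Gamma α) * B| ≤ g α := by
    refine le_trans (abs_add_three _ _ _) ?_
    have t1 : |(1 / Real.Gamma α) * (A - u₀ * (δ ^ α / α))|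
        ≤ ε' * (δ ^ α / Real.Gamma (α + 1)) := by
      rw [abs_mul, abs_of_nonneg hΓinv]
      calc (1 / Real.Gamma α) * |A - u₀ * (δ ^ α / α)|
          ≤ (1 / Real.Gamma α) * (ε' * (δ ^ α / α)) := mul_le_mul_of_nonneg_left hE1 hΓinv
        _ = ε' * (δ ^ α / Real.Gamma (α + 1)) := by rw [hΓ1]; field_simp
    have t2 : |u₀ * (δ ^ α / Real.Gamma (α + 1) - 1)|
        = |u₀| * |δ ^ α / Real.Gamma (α + 1) - 1| := abs_mul _ _
    have t3 : |(1 / Real.Gamma α) * B| ≤ c * δ ^ (α - 1) * (α / Real.Gamma (α + 1)) := by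
      rw [abs_mul, abs_of_nonneg hΓinv]
      calc (1 / Real.Gamma α) * |B| ≤ (1 / Real.Gamma α) * (δ ^ (α - 1) * c) :=
            mul_le_mul_of_nonneg_left hE2 hΓinv
        _ = c * δ ^ (α - 1) * (α / Real.Gamma (α + 1)) := by rw [hΓ1]; field_simp
    rw [hgdef]
    dsimp only
    rw [t2]
    linarith
  exact lt_of_le_of_lt key hgα
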